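/- For the Heisenberg Lie algebra H_{2n+1} with n ≥ 2, every scalar 2-cocycle ω on H_{2n+1} satisfies ω(x, z) = 0 for all x, where z is the central generator. Consequently, for any 1-form α vanishing on brackets, the map Φ(x) = ι_xω + α(x)α is not injective. -/

import Mathlib

/-- The `(2n+1)`-dimensional Heisenberg Lie algebra: elements `(x, y, s)` stand
for `∑ xᵢ eᵢ + ∑ yᵢ fᵢ + s z`, with the only nonzero brackets `[eᵢ, fᵢ] = z`. -/
def Heis (n : ℕ) : Type := (Fin n → ℝ) × (Fin n → ℝ) × ℝ

instance (n : ℕ) : AddCommGroup (Heis n) :=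
  inferInstanceAs (AddCommGroup ((Fin n → ℝ) × (Fin n → ℝ) × ℝ))

noncomputable instance (n : ℕ) : Module ℝ (Heis n) :=
  inferInstanceAs (Module ℝ ((Fin n → ℝ) × (Fin n → ℝ) × ℝ))

instance (n : ℕ) : Module.Finite ℝ (Heis n) :=
  inferInstanceAs (Module.Finite ℝ ((Fin n → ℝ) × (Fin n → ℝ) × ℝ))

noncomputable instance (n : ℕ) : LieRing (Heis n) where
  bracket x y := (0, 0, ∑ i, (x.1 i * y.2.1 i - y.1 i * x.2.1 i))
  add_lie x y z := by
    refine Prod.ext (zero_add (0 : Fin n → ℝ)).symm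
      (Prod.ext (zero_add (0 : Fin n → ℝ)).symm ?_)
    show (∑ i, ((x + y).1 i * z.2.1 i - z.1 i * (x + y).2.1 i)) =
      (∑ i, (x.1 i * z.2.1 i - z.1 i * x.2.1 i)) +
      (∑ i, (y.1 i * z.2.1 i - z.1 i * y.2.1 i))
    rw [← Finset.sum_add_distrib]
    refine Finset.sum_congr rfl fun i _ => ?_
    show ((x.1 + y.1) i * z.2.1 i - z.1 i * (x.2.1 + y.2.1) i) = _
    simp only [Pi.add_apply]; ring
  lie_add x y z := by
    refine Prod.ext (zero_add (0 : Fin n → ℝ)).symm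
      (Prod.ext (zero_add (0 : Fin n → ℝ)).symm ?_)
    show (∑ i, (x.1 i * (y + z).2.1 i - (y + z).1 i * x.2.1 i)) =
      (∑ i, (x.1 i * y.2.1 i - y.1 i * x.2.1 i)) +
      (∑ i, (x.1 i * z.2.1 i - z.1 i * x.2.1 i))
    rw [← Finset.sum_add_distrib]
    refine Finset.sum_congr rfl fun i _ => ?_
    show (x.1 i * (y.2.1 + z.2.1) i - (y.1 + z.1) i * x.2.1 i) = _
    simp only [Pi.add_apply]; ring
  lie_self x := by
    refine Prod.ext rfl (Prod.ext rfl ?_)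
    show (∑ i, (x.1 i * x.2.1 i - x.1 i * x.2.1 i)) = 0
    simp
  leibniz_lie x y z := by
    refine Prod.ext (zero_add (0 : Fin n → ℝ)).symm
      (Prod.ext (zero_add (0 : Fin n → ℝ)).symm ?_)
    show (∑ i, (x.1 i * (0 : Fin n → ℝ) i - (0 : Fin n → ℝ) i * x.2.1 i)) =
      (∑ i, ((0 : Fin n → ℝ) i * z.2.1 i - z.1 i * (0 : Fin n → ℝ) i)) +
      (∑ i, (y.1 i * (0 : Fin n → ℝ) i - (0 : Fin n → ℝ) i * y.2.1 i))
    simp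

noncomputable instance (n : ℕ) : LieAlgebra ℝ (Heis n) where
  lie_smul c x y := by
    refine Prod.ext (smul_zero c).symm (Prod.ext (smul_zero c).symm ?_)
    show (∑ i, (x.1 i * (c • y).2.1 i - (c • y).1 i * x.2.1 i)) =
      c * (∑ i, (x.1 i * y.2.1 i - y.1 i * x.2.1 i))
    rw [Finset.mul_sum]
    refine Finset.sum_congr rfl fun i _ => ?_
    show (x.1 i * (c • y.2.1) i - (c • y.1) i * x.2.1 i) = _
    simp only [Pi.smul_apply, smul_eq_mul]; ring


/-- For the Heisenberg algebra `H_{2n+1}` with `n ≥ 2`, every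
scalar 2-cocycle `ω` pairs to zero with the central generator `z = (0,0,1)`;
consequently, for any 1-form `α` vanishing on brackets, the map
`Φ(x) = ι_x ω + α(x) α` is not injective. -/
theorem heisenberg_cocycle_central (n : ℕ) (hn : 2 ≤ n)
    (ω : Heis n →ₗ[ℝ] Heis n →ₗ[ℝ] ℝ)
    (hskew : ∀ x y : Heis n, ω x y = - ω y x)
    (hcocycle : ∀ x y w : Heis n, ω ⁅x, y⁆ w + ω ⁅y, w⁆ x + ω ⁅w, x⁆ y = 0) :
    (∀ x : Heis n, ω x ((0, 0, 1) : Heis n) = 0) ∧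
    (∀ α : Heis n →ₗ[ℝ] ℝ, (∀ x y : Heis n, α ⁅x, y⁆ = 0) →
      ¬ Function.Injective (fun x : Heis n => ω x + α x • α)) := by
  set z : Heis n := ((0, 0, 1) : Heis n) with hzdef
  have hbr : ∀ x y : Heis n,
      ⁅x, y⁆ = ((0, 0, ∑ i, (x.1 i * y.2.1 i - y.1 i * x.2.1 i)) : Heis n) :=
    fun _ _ => rfl
  have hsc : ∀ c : ℝ, ((0, 0, c) : Heis n) = c • z := by
    intro c
    show ((0,0,c) : (Fin n → ℝ) × (Fin n → ℝ) × ℝ) = c • ((0,0,1) : (Fin n → ℝ) × (Fin n → ℝ) × ℝ)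
    refine Prod.ext (by simp) (Prod.ext (by simp) (by simp))
  -- basis vectors
  set e : Fin n → Heis n := fun i => ((Pi.single i 1 : Fin n → ℝ), 0, 0) with hedef
  set f : Fin n → Heis n := fun i => (0, (Pi.single i 1 : Fin n → ℝ), 0) with hfdef
  have hef : ∀ i, ⁅e i, f i⁆ = z := by
    intro i
    rw [hbr]
    have : (∑ j, ((e i).1 j * (f i).2.1 j - (f i).1 j * (e i).2.1 j)) = 1 := by
      simp [hedef, hfdef, Pi.single_apply]
    rw [this]
  have hfw : ∀ (i : Fin n) (w : Heis n), ⁅f i, w⁆ = (-w.1 i) • z := by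
    intro i w
    rw [hbr, ← hsc]
    congr 1; congr 1
    simp [hfdef, Pi.single_apply, Finset.mul_sum]
  have hwe : ∀ (i : Fin n) (w : Heis n), ⁅w, e i⁆ = (-w.2.1 i) • z := by
    intro i w
    rw [hbr, ← hsc]
    congr 1; congr 1
    simp [hedef, Pi.single_apply]
  -- key identity
  have key : ∀ (i : Fin n) (w : Heis n),
      ω z w = w.1 i * ω z (e i) + w.2.1 i * ω z (f i) := by
    intro i w
    have h := hcocycle (e i) (f i) w
    rw [hef i, hfw i w, hwe i w] at h
    simp only [map_smul, LinearMap.smul_apply, smul_eq_mul] at h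
    linarith
  -- two distinct indices
  have h0 : (0 : ℕ) < n := by omega
  have h1 : (1 : ℕ) < n := by omega
  set i0 : Fin n := ⟨0, h0⟩
  set i1 : Fin n := ⟨1, h1⟩
  have hne : i0 ≠ i1 := by simp [i0, i1, Fin.ext_iff]
  have hA : ∀ i : Fin n, ω z (e i) = 0 := by
    intro i
    rcases eq_or_ne i i0 with h | h
    · have := key i1 (e i)
      subst h
      simpa [hedef, Pi.single_apply, Ne.symm hne, hne] using this
    · have := key i0 (e i)
      have h1' : (e i).1 i0 = 0 := by
        simp [hedef, Pi.single_apply, Ne.symm h]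
      have h2' : (e i).2.1 i0 = 0 := by simp [hedef]
      rw [h1', h2'] at this
      simpa using this
  have hB : ∀ i : Fin n, ω z (f i) = 0 := by
    intro i
    rcases eq_or_ne i i0 with h | h
    · have := key i1 (f i)
      subst h
      simpa [hfdef, Pi.single_apply, Ne.symm hne, hne] using this
    · have := key i0 (f i)
      have h1' : (f i).1 i0 = 0 := by simp [hfdef]
      have h2' : (f i).2.1 i0 = 0 := by
        simp [hfdef, Pi.single_apply, Ne.symm h]
      rw [h1', h2'] at this
      simpa using this
  have hzw : ∀ w : Heis n, ω z w = 0 := by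
    intro w
    rw [key i0 w, hA, hB]; ring
  constructor
  · intro x
    rw [hskew x z, hzw x, neg_zero]
  · intro α hα hinj
    have hΦz : (fun x : Heis n => ω x + α x • α) z =
        (fun x : Heis n => ω x + α x • α) 0 := by
      have hωz : ω z = 0 := by ext y; exact hzw y
      have hαz : α z = 0 := by
        rw [← hef i0]; exact hα _ _
      simp only [map_zero, zero_smul, add_zero, hωz, hαz]
    have := hinj hΦz
    have : (z : (Fin n → ℝ) × (Fin n → ℝ) × ℝ).2.2 = (0 : Heis n).2.2 := by rw [this]
    simp [hzdef] at this
    exact one_ne_zero this
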